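/- There exists a function C : ℕ × ℕ × ℕ → ℕ such that the following holds. Let Δ, k, R be positive integers and let G be a connected finite simple graph on N > C(Δ,k,R) vertices in which every vertex has degree exactly Δ and whose closed neighborhoods B_i(1) are pairwise distinct. Define Q†_{nn} = ∑_{i∈V} ∏_{j∈B_i(1)} s†_j (the operators s†_j commute, so this product is well defined). For every k-local Hamiltonian H of range R with respect to G such that for every natural number p with (Q†_{nn})^p |0̄⟩ ≠ 0 there is E_p ∈ ℂ with H (Q†_{nn})^p |0̄⟩ = E_p (Q†_{nn})^p |0̄⟩, there exist Ω, ω ∈ ℂ with E_p = Ω + ω·p for every such p. -/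

import Mathlib

open scoped BigOperators
set_option linter.unusedSectionVars false

noncomputable section

/-- The state space of a collection of qubits indexed by `V`: the complex vector space of
functions from configurations `V → Bool` to `ℂ`. -/
abbrev QState (V : Type*) := (V → Bool) → ℂ

section Defs

variable {V : Type*} [Fintype V] [DecidableEq V]

/-- The standard basis vector associated to the configuration `f`. -/
def basisVec (f : V → Bool) : QState V := fun g => if g = f then 1 else 0

/-- The creation operator `s†_i` at site `i`. -/
def creOp (i : V) : Module.End ℂ (QState V) where
  toFun ψ := fun g => if g i = true then ψ (Function.update g i false) else 0
  map_add' ψ φ := by funext g; by_cases h : g i = true <;> simp [h]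
  map_smul' a ψ := by funext g; by_cases h : g i = true <;> simp [h]

/-- The annihilation operator `s_i` at site `i`. -/
def annOp (i : V) : Module.End ℂ (QState V) where
  toFun ψ := fun g => if g i = false then ψ (Function.update g i true) else 0
  map_add' ψ φ := by funext g; by_cases h : g i = false <;> simp [h]
  map_smul' a ψ := by funext g; by_cases h : g i = false <;> simp [h]

@[simp] lemma creOp_apply (i : V) (ψ : QState V) (g : V → Bool) :
    creOp i ψ g = if g i = true then ψ (Function.update g i false) else 0 := rfl

variable (V)

/-- The vacuum `|0̄⟩`: the basis vector of the all-false configuration. -/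
def vac : QState V := basisVec (fun _ => false)

/-- The total raising operator `S† = ∑ i, s†_i`. -/
def Sdag : Module.End ℂ (QState V) := ∑ i : V, creOp i

/-- The number operator `N̂ = ∑ i, s†_i s_i`. -/
def numOp : Module.End ℂ (QState V) := ∑ i : V, creOp i * annOp i

/-- The unnormalized Dicke state `|W^p⟩ = (S†)^p |0̄⟩`. -/
def WState (p : ℕ) : QState V := ((Sdag V) ^ p) (vac V)

variable {V}

/-- Creation operators at different sites commute. -/
lemma creOp_commute (i j : V) : Commute (creOp (V := V) i) (creOp j) := by
  rcases eq_or_ne i j with rfl | hij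
  · exact Commute.refl _
  · show creOp i * creOp j = creOp j * creOp i
    refine LinearMap.ext fun ψ => funext fun g => ?_
    simp only [Module.End.mul_apply, creOp_apply]
    by_cases hi : g i = true <;> by_cases hj : g j = true <;>
      simp [hi, hj, Function.update_of_ne hij, Function.update_of_ne hij.symm,
        Function.update_comm hij]

/-- The product `∏_{j ∈ Y} s†_j` of creation operators over a finite set `Y` of sites
(the operators commute, so the product is well defined; the empty product is the identity). -/
def creProd (Y : Finset V) : Module.End ℂ (QState V) :=
  Y.noncommProd creOp fun a _ b _ _ => creOp_commute a b

/-- The operator `O` is supported on the set of sites `X`. -/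
def SupportedOn (O : Module.End ℂ (QState V)) (X : Set V) : Prop :=
  (∀ f g : V → Bool, (∃ i ∉ X, f i ≠ g i) → O (basisVec f) g = 0) ∧
  (∀ f f' g g' : V → Bool,
    (∀ i ∈ X, f i = f' i) → (∀ i ∈ X, g i = g' i) →
    (∀ i ∉ X, f i = g i) → (∀ i ∉ X, f' i = g' i) →
    O (basisVec f) g = O (basisVec f') g')

/-- An operator is `k`-local if it is a finite sum of operators each supported
on a subset of at most `k` sites. -/
def IsKLocal (k : ℕ) (O : Module.End ℂ (QState V)) : Prop :=
  ∃ (n : ℕ) (h : Fin n → Module.End ℂ (QState V)) (X : Fin n → Finset V),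
    (∀ t, SupportedOn (h t) ↑(X t)) ∧ (∀ t, (X t).card ≤ k) ∧ O = ∑ t, h t

/-- Vertices `i` and `j` are within distance `r` in the graph `G`:
they are joined by a walk of length at most `r`. -/
def WithinDist (G : SimpleGraph V) (r : ℕ) (i j : V) : Prop :=
  ∃ w : G.Walk i j, w.length ≤ r

/-- The ball of radius `r` around vertex `i` in the graph `G`. -/
def gball (G : SimpleGraph V) (i : V) (r : ℕ) : Set V := {j | WithinDist G r i j}

/-- `diam(X) ≤ R` with respect to `G`: every two vertices of `X` are within distance `R - 1`. -/
def GDiamLE (G : SimpleGraph V) (X : Finset V) (R : ℕ) : Prop :=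
  ∀ i ∈ X, ∀ j ∈ X, WithinDist G (R - 1) i j

/-- `H` is a Hamiltonian of range `R` with respect to the graph `G`: a finite sum over
nonempty subsets `X` with `diam(X) ≤ R` of operators supported on `X`. -/
def IsRangeHam (G : SimpleGraph V) (R : ℕ) (H : Module.End ℂ (QState V)) : Prop :=
  ∃ h : Finset V → Module.End ℂ (QState V),
    (∀ X, SupportedOn (h X) ↑X) ∧
    (∀ X, h X ≠ 0 → X.Nonempty ∧ GDiamLE G X R) ∧
    H = ∑ X : Finset V, h X

/-- `H` is a `k`-local Hamiltonian of range `R` with respect to the graph `G`. -/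
def IsKLocalRangeHam (G : SimpleGraph V) (k R : ℕ) (H : Module.End ℂ (QState V)) : Prop :=
  ∃ h : Finset V → Module.End ℂ (QState V),
    (∀ X, SupportedOn (h X) ↑X) ∧
    (∀ X, h X ≠ 0 → X.Nonempty ∧ GDiamLE G X R ∧ X.card ≤ k) ∧
    H = ∑ X : Finset V, h X

/-- An invertible linear operator `M` is `δ`-locality-preserving with respect to `G` if
conjugation by `M` or `M⁻¹` increases the range of any operator by at most `δ`. -/
def LocalityPreserving (G : SimpleGraph V) (δ : ℕ) (M : QState V ≃ₗ[ℂ] QState V) : Prop :=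
  ∀ R : ℕ, 0 < R → ∀ O : Module.End ℂ (QState V), IsRangeHam G R O →
    IsRangeHam G (R + δ) (M.toLinearMap ∘ₗ O ∘ₗ M.symm.toLinearMap) ∧
    IsRangeHam G (R + δ) (M.symm.toLinearMap ∘ₗ O ∘ₗ M.toLinearMap)

end Defs

section Chain

/-- Distance between two sites of the open chain `{0, …, N-1}`. -/
def chainDist {N : ℕ} (i j : Fin N) : ℕ := ((i : ℤ) - (j : ℤ)).natAbs

/-- `diam(X) ≤ R` on the open chain: `diam(X) = 1 + max |i - j|`. -/
def ChainDiamLE {N : ℕ} (X : Finset (Fin N)) (R : ℕ) : Prop :=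
  ∀ i ∈ X, ∀ j ∈ X, chainDist i j + 1 ≤ R

/-- `H` is a Hamiltonian of range `R` on the open chain of `N` sites. -/
def IsChainRangeHam {N : ℕ} (R : ℕ) (H : Module.End ℂ (QState (Fin N))) : Prop :=
  ∃ h : Finset (Fin N) → Module.End ℂ (QState (Fin N)),
    (∀ X, SupportedOn (h X) ↑X) ∧
    (∀ X, h X ≠ 0 → X.Nonempty ∧ ChainDiamLE X R) ∧
    H = ∑ X : Finset (Fin N), h X

/-- `H` is a `k`-local Hamiltonian of range `R` on the open chain of `N` sites. -/
def IsChainKLocalRangeHam {N : ℕ} (k R : ℕ) (H : Module.End ℂ (QState (Fin N))) : Prop :=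
  ∃ h : Finset (Fin N) → Module.End ℂ (QState (Fin N)),
    (∀ X, SupportedOn (h X) ↑X) ∧
    (∀ X, h X ≠ 0 → X.Nonempty ∧ ChainDiamLE X R ∧ X.card ≤ k) ∧
    H = ∑ X : Finset (Fin N), h X

end Chain

end
/-- The nearest-neighbor quasiparticle creation operator
`Q†_{nn} = ∑ i, ∏_{j ∈ B_i(1)} s†_j`, where `B_i(1) = {i} ∪ (neighbors of i)`. -/
noncomputable def Qnn {V : Type*} [Fintype V] [DecidableEq V]
    (G : SimpleGraph V) [DecidableRel G.Adj] : Module.End ℂ (QState V) :=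
  ∑ i : V, creProd (insert i (G.neighborFinset i))

section AuxBasics

open scoped Classical

variable {V : Type*} [Fintype V] [DecidableEq V]

lemma basisVec_apply' (f g : V → Bool) : basisVec f g = if g = f then 1 else 0 := rfl

lemma vac_eq : vac V = basisVec (fun _ => false) := rfl

lemma basis_expand (ψ : QState V) : ψ = ∑ f : V → Bool, ψ f • basisVec f := by
  funext g
  rw [Finset.sum_apply]
  have h : ∀ f : V → Bool, (ψ f • basisVec f) g = if g = f then ψ f else 0 := by
    intro f
    by_cases h : g = f <;> simp [basisVec, h]
  rw [Finset.sum_congr rfl (fun f _ => h f)]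
  simp

lemma apply_eq_sum (K : Module.End ℂ (QState V)) (ψ : QState V) (f : V → Bool) :
    (K ψ) f = ∑ f' : V → Bool, ψ f' * (K (basisVec f')) f := by
  conv_lhs => rw [basis_expand ψ]
  rw [map_sum]
  rw [Finset.sum_apply]
  exact Finset.sum_congr rfl (fun f' _ => by simp)

/-- Set all sites of `B` to `false`. -/
def eraseB (B : Finset V) (g : V → Bool) : V → Bool := fun i => if i ∈ B then false else g i

/-- Set all sites of `B` to `true`. -/
def setB (B : Finset V) (g : V → Bool) : V → Bool := fun i => if i ∈ B then true else g i

/-- Characteristic configuration of a finite set. -/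
def chi (U : Finset V) : V → Bool := fun i => if i ∈ U then true else false

/-- The occupied sites of a configuration. -/
def suppF (g : V → Bool) : Finset V := Finset.univ.filter (fun i => g i = true)

lemma mem_suppF {g : V → Bool} {i : V} : i ∈ suppF g ↔ g i = true := by
  simp [suppF]

lemma suppF_eraseB (B : Finset V) (g : V → Bool) : suppF (eraseB B g) = suppF g \ B := by
  ext i
  by_cases h : i ∈ B <;> simp [mem_suppF, eraseB, h, Finset.mem_sdiff]

lemma suppF_chi (U : Finset V) : suppF (chi U) = U := by
  ext i
  by_cases h : i ∈ U <;> simp [mem_suppF, chi, h]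

lemma creProd_apply_gen (Y : Finset V) (ψ : QState V) (g : V → Bool) :
    creProd Y ψ g = if ∀ j ∈ Y, g j = true then ψ (eraseB Y g) else 0 := by
  induction Y using Finset.induction_on generalizing g with
  | empty =>
      have h1 : creProd (∅ : Finset V) = 1 := Finset.noncommProd_empty _ _
      have h2 : eraseB (∅ : Finset V) g = g := by funext i; simp [eraseB]
      simp [h1, h2]
  | @insert j Y hj ih =>
      have h1 : creProd (insert j Y) = creOp j * creProd Y :=
        Finset.noncommProd_insert_of_notMem _ _ _ _ hj
      rw [h1]
      have h2 : (creOp j * creProd Y : Module.End ℂ (QState V)) ψ g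
          = creOp j (creProd Y ψ) g := rfl
      rw [h2, creOp_apply]
      by_cases hgj : g j = true
      · rw [if_pos hgj, ih]
        have hcond : (∀ i ∈ Y, (Function.update g j false) i = true) ↔ (∀ i ∈ Y, g i = true) := by
          constructor
          · intro h i hi
            have := h i hi
            rwa [Function.update_of_ne (fun he => hj (by rw [← he]; exact hi)) _ _] at this
          · intro h i hi
            rw [Function.update_of_ne (fun he => hj (by rw [← he]; exact hi)) _ _]
            exact h i hi
        have herase : eraseB Y (Function.update g j false) = eraseB (insert j Y) g := by
          funext i
          by_cases hiY : i ∈ Y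
          · simp [eraseB, hiY, Finset.mem_insert]
          · by_cases hij : i = j
            · subst hij
              simp [eraseB, hiY, Function.update_self]
            · simp [eraseB, hiY, hij, Function.update_of_ne hij]
        rw [herase]
        by_cases hY : ∀ i ∈ Y, g i = true
        · rw [if_pos (hcond.mpr hY), if_pos]
          intro i hi
          rcases Finset.mem_insert.mp hi with h | h
          · exact h ▸ hgj
          · exact hY i h
        · rw [if_neg (fun hc => hY (hcond.mp hc)), if_neg]
          intro hc
          exact hY (fun i hi => hc i (Finset.mem_insert_of_mem hi))
      · rw [if_neg hgj, if_neg]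
        intro hc
        exact hgj (hc j (Finset.mem_insert_self j Y))

lemma creProd_basisVec (B : Finset V) (f : V → Bool) :
    creProd B (basisVec f) =
      if ∀ i ∈ B, f i = false then basisVec (setB B f) else 0 := by
  funext g
  rw [creProd_apply_gen]
  by_cases hg : ∀ j ∈ B, g j = true
  · rw [if_pos hg]
    by_cases hf : ∀ i ∈ B, f i = false
    · rw [if_pos hf]
      show (if eraseB B g = f then (1:ℂ) else 0) = if g = setB B f then 1 else 0
      have : eraseB B g = f ↔ g = setB B f := by
        constructor
        · intro h
          funext i
          by_cases hi : i ∈ B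
          · simp [setB, hi, hg i hi]
          · rw [← h]; simp [setB, eraseB, hi]
        · intro h
          funext i
          by_cases hi : i ∈ B
          · simp [eraseB, hi, (hf i hi).symm]
          · simp [eraseB, hi, h, setB]
      by_cases h : eraseB B g = f
      · rw [if_pos h, if_pos (this.mp h)]
      · rw [if_neg h, if_neg (fun hc => h (this.mpr hc))]
    · rw [if_neg hf]
      show (if eraseB B g = f then (1:ℂ) else 0) = 0
      rw [if_neg]
      intro h
      exact hf (fun i hi => by rw [← h]; simp [eraseB, hi])
  · rw [if_neg hg]
    by_cases hf : ∀ i ∈ B, f i = false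
    · rw [if_pos hf]
      show (0:ℂ) = if g = setB B f then 1 else 0
      rw [if_neg]
      intro h
      exact hg (fun j hj => by rw [h]; simp [setB, hj])
    · rw [if_neg hf]
      rfl

end AuxBasics
section AuxSupport

open scoped Classical

variable {V : Type*} [Fintype V] [DecidableEq V]

lemma supportedOn_zero (S : Set V) : SupportedOn (0 : Module.End ℂ (QState V)) S := by
  constructor
  · intro f g _; simp
  · intro f f' g g' _ _ _ _; simp

lemma supportedOn_sub {O₁ O₂ : Module.End ℂ (QState V)} {S : Set V}
    (h₁ : SupportedOn O₁ S) (h₂ : SupportedOn O₂ S) : SupportedOn (O₁ - O₂) S := by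
  constructor
  · intro f g h
    show O₁ (basisVec f) g - O₂ (basisVec f) g = 0
    rw [h₁.1 f g h, h₂.1 f g h, sub_zero]
  · intro f f' g g' a b c d
    show O₁ (basisVec f) g - O₂ (basisVec f) g = O₁ (basisVec f') g' - O₂ (basisVec f') g'
    rw [h₁.2 f f' g g' a b c d, h₂.2 f f' g g' a b c d]

lemma supportedOn_sum {ι : Type*} {s : Finset ι} {O : ι → Module.End ℂ (QState V)} {S : Set V}
    (h : ∀ i ∈ s, SupportedOn (O i) S) : SupportedOn (∑ i ∈ s, O i) S := by
  constructor
  · intro f g hd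
    show ((∑ i ∈ s, O i) (basisVec f)) g = 0
    rw [LinearMap.sum_apply, Finset.sum_apply]
    exact Finset.sum_eq_zero (fun i hi => (h i hi).1 f g hd)
  · intro f f' g g' a b c d
    show ((∑ i ∈ s, O i) (basisVec f)) g = ((∑ i ∈ s, O i) (basisVec f')) g'
    rw [LinearMap.sum_apply, Finset.sum_apply, LinearMap.sum_apply, Finset.sum_apply]
    exact Finset.sum_congr rfl (fun i hi => (h i hi).2 f f' g g' a b c d)

lemma supportedOn_mono {O : Module.End ℂ (QState V)} {S T : Set V}
    (h : SupportedOn O S) (hST : S ⊆ T) : SupportedOn O T := by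
  constructor
  · rintro f g ⟨i, hiT, hne⟩
    exact h.1 f g ⟨i, fun c => hiT (hST c), hne⟩
  · intro f f' g g' hff' hgg' hfg hf'g'
    by_cases hd : ∃ i, i ∉ S ∧ f i ≠ g i
    · obtain ⟨i, hiS, hne⟩ := hd
      have hiT : i ∈ T := by
        by_contra hiT
        exact hne (hfg i hiT)
      have hne' : f' i ≠ g' i := by
        rw [← hff' i hiT, ← hgg' i hiT]; exact hne
      rw [h.1 f g ⟨i, hiS, hne⟩, h.1 f' g' ⟨i, hiS, hne'⟩]
    · push_neg at hd
      have hfg' : ∀ i ∉ S, f' i = g' i := by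
        intro i hiS
        by_cases hiT : i ∈ T
        · rw [← hff' i hiT, ← hgg' i hiT]; exact hd i hiS
        · exact hf'g' i hiT
      exact h.2 f f' g g' (fun i hi => hff' i (hST hi)) (fun i hi => hgg' i (hST hi)) hd hfg'

lemma supportedOn_creProd (B : Finset V) :
    SupportedOn (creProd B : Module.End ℂ (QState V)) (↑B : Set V) := by
  constructor
  · rintro f g ⟨i, hiB, hne⟩
    rw [creProd_apply_gen]
    by_cases hg : ∀ j ∈ B, g j = true
    · rw [if_pos hg]
      show (if eraseB B g = f then (1:ℂ) else 0) = 0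
      rw [if_neg]
      intro h
      apply hne
      rw [← h]
      have hiB' : i ∉ B := fun c => hiB (Finset.mem_coe.mpr c)
      simp [eraseB, hiB']
    · rw [if_neg hg]
  · intro f f' g g' hff' hgg' hfg hf'g'
    rw [creProd_apply_gen, creProd_apply_gen]
    have hcond : (∀ j ∈ B, g j = true) ↔ (∀ j ∈ B, g' j = true) := by
      constructor
      · intro h j hj; rw [← hgg' j (Finset.mem_coe.mpr hj)]; exact h j hj
      · intro h j hj; rw [hgg' j (Finset.mem_coe.mpr hj)]; exact h j hj
    by_cases hg : ∀ j ∈ B, g j = true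
    · rw [if_pos hg, if_pos (hcond.mp hg)]
      show (if eraseB B g = f then (1:ℂ) else 0) = if eraseB B g' = f' then 1 else 0
      have hiff : eraseB B g = f ↔ eraseB B g' = f' := by
        constructor
        · intro h
          funext i
          by_cases hi : i ∈ B
          · have : f i = false := by rw [← h]; simp [eraseB, hi]
            have h2 : f' i = false := by rw [← hff' i (Finset.mem_coe.mpr hi)]; exact this
            simp [eraseB, hi, h2.symm]
          · simp [eraseB, hi, (hf'g' i (fun c => hi (Finset.mem_coe.mp c))).symm]
        · intro h
          funext i
          by_cases hi : i ∈ B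
          · have : f' i = false := by rw [← h]; simp [eraseB, hi]
            have h2 : f i = false := by rw [hff' i (Finset.mem_coe.mpr hi)]; exact this
            simp [eraseB, hi, h2.symm]
          · simp [eraseB, hi, (hfg i (fun c => hi (Finset.mem_coe.mp c))).symm]
      by_cases h : eraseB B g = f
      · rw [if_pos h, if_pos (hiff.mp h)]
      · rw [if_neg h, if_neg (fun c => h (hiff.mpr c))]
    · rw [if_neg hg, if_neg (fun c => hg (hcond.mpr c))]

lemma mul_creProd_apply (K : Module.End ℂ (QState V)) (B : Finset V) (f : V → Bool) :
    (K * creProd B) (basisVec f) =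
      if ∀ i ∈ B, f i = false then K (basisVec (setB B f)) else 0 := by
  show K (creProd B (basisVec f)) = _
  rw [creProd_basisVec]
  by_cases h : ∀ i ∈ B, f i = false
  · rw [if_pos h, if_pos h]
  · rw [if_neg h, if_neg h, map_zero]

lemma creProd_mul_apply (K : Module.End ℂ (QState V)) (B : Finset V) (f : V → Bool)
    (g : V → Bool) :
    ((creProd B * K) (basisVec f)) g =
      if ∀ j ∈ B, g j = true then (K (basisVec f)) (eraseB B g) else 0 := by
  show (creProd B (K (basisVec f))) g = _
  rw [creProd_apply_gen]

lemma supportedOn_mul_creProd {K : Module.End ℂ (QState V)} {S : Set V}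
    (hK : SupportedOn K S) (B : Finset V) :
    SupportedOn (K * creProd B) (S ∪ ↑B) := by
  constructor
  · rintro f g ⟨i, hi, hne⟩
    have hiS : i ∉ S := fun c => hi (Set.mem_union_left _ c)
    have hiB : i ∉ B := fun c => hi (Set.mem_union_right _ (Finset.mem_coe.mpr c))
    rw [mul_creProd_apply]
    by_cases h : ∀ j ∈ B, f j = false
    · rw [if_pos h]
      apply hK.1
      exact ⟨i, hiS, by simp [setB, hiB, hne]⟩
    · rw [if_neg h]; rfl
  · intro f f' g g' hff' hgg' hfg hf'g'
    rw [mul_creProd_apply, mul_creProd_apply]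
    have hcond : (∀ j ∈ B, f j = false) ↔ (∀ j ∈ B, f' j = false) := by
      constructor
      · intro h j hj; rw [← hff' j (Set.mem_union_right _ (Finset.mem_coe.mpr hj))]; exact h j hj
      · intro h j hj; rw [hff' j (Set.mem_union_right _ (Finset.mem_coe.mpr hj))]; exact h j hj
    by_cases h : ∀ j ∈ B, f j = false
    · rw [if_pos h, if_pos (hcond.mp h)]
      by_cases hfail : ∃ i, i ∉ S ∧ setB B f i ≠ g i
      · obtain ⟨i, hiS, hne⟩ := hfail
        have hne' : setB B f' i ≠ g' i := by
          by_cases hiB : i ∈ B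
          · have hgi : g i = false := by
              cases hgi : g i
              · rfl
              · exact absurd (by simp [setB, hiB, hgi]) hne
            have : g' i = false := by
              rw [← hgg' i (Set.mem_union_right _ (Finset.mem_coe.mpr hiB))]; exact hgi
            simp [setB, hiB, this]
          · have hiSB : i ∉ S ∪ ↑B := by
              rintro (c | c)
              exacts [hiS c, hiB (Finset.mem_coe.mp c)]
            have h1 : setB B f i = f i := by simp [setB, hiB]
            exact absurd (h1.trans (hfg i hiSB)) hne
        rw [hK.1 _ _ ⟨i, hiS, hne⟩, hK.1 _ _ ⟨i, hiS, hne'⟩]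
      · push_neg at hfail
        have hfail' : ∀ i ∉ S, setB B f' i = g' i := by
          intro i hiS
          by_cases hiB : i ∈ B
          · have : setB B f i = g i := hfail i hiS
            have h1 : g i = true := by rw [← this]; simp [setB, hiB]
            have : g' i = true := by
              rw [← hgg' i (Set.mem_union_right _ (Finset.mem_coe.mpr hiB))]; exact h1
            simp [setB, hiB, this]
          · have hiSB : i ∉ S ∪ ↑B := by
              rintro (c | c)
              exacts [hiS c, hiB (Finset.mem_coe.mp c)]
            simp [setB, hiB, hf'g' i hiSB]
        apply hK.2
        · intro i hi
          by_cases hiB : i ∈ B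
          · simp [setB, hiB]
          · simp [setB, hiB, hff' i (Set.mem_union_left _ hi)]
        · intro i hi
          exact hgg' i (Set.mem_union_left _ hi)
        · exact hfail
        · exact hfail'
    · rw [if_neg h, if_neg (fun c => h (hcond.mpr c))]
      rfl

lemma supportedOn_creProd_mul {K : Module.End ℂ (QState V)} {S : Set V}
    (hK : SupportedOn K S) (B : Finset V) :
    SupportedOn (creProd B * K) (S ∪ ↑B) := by
  constructor
  · rintro f g ⟨i, hi, hne⟩
    have hiS : i ∉ S := fun c => hi (Set.mem_union_left _ c)
    have hiB : i ∉ B := fun c => hi (Set.mem_union_right _ (Finset.mem_coe.mpr c))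
    rw [creProd_mul_apply]
    by_cases h : ∀ j ∈ B, g j = true
    · rw [if_pos h]
      apply hK.1
      exact ⟨i, hiS, by simpa [eraseB, hiB] using hne⟩
    · rw [if_neg h]
  · intro f f' g g' hff' hgg' hfg hf'g'
    rw [creProd_mul_apply, creProd_mul_apply]
    have hcond : (∀ j ∈ B, g j = true) ↔ (∀ j ∈ B, g' j = true) := by
      constructor
      · intro h j hj; rw [← hgg' j (Set.mem_union_right _ (Finset.mem_coe.mpr hj))]; exact h j hj
      · intro h j hj; rw [hgg' j (Set.mem_union_right _ (Finset.mem_coe.mpr hj))]; exact h j hj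
    by_cases h : ∀ j ∈ B, g j = true
    · rw [if_pos h, if_pos (hcond.mp h)]
      by_cases hfail : ∃ i, i ∉ S ∧ f i ≠ eraseB B g i
      · obtain ⟨i, hiS, hne⟩ := hfail
        have hne' : f' i ≠ eraseB B g' i := by
          by_cases hiB : i ∈ B
          · have hfi : f i = true := by
              cases hfi : f i
              · exact absurd (by simp [eraseB, hiB, hfi]) hne
              · rfl
            have : f' i = true := by
              rw [← hff' i (Set.mem_union_right _ (Finset.mem_coe.mpr hiB))]; exact hfi
            simp [eraseB, hiB, this]
          · have hiSB : i ∉ S ∪ ↑B := by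
              rintro (c | c)
              exacts [hiS c, hiB (Finset.mem_coe.mp c)]
            have h1 : eraseB B g i = g i := by simp [eraseB, hiB]
            exact absurd ((hfg i hiSB).trans h1.symm) hne
        rw [hK.1 _ _ ⟨i, hiS, hne⟩, hK.1 _ _ ⟨i, hiS, hne'⟩]
      · push_neg at hfail
        have hfail' : ∀ i ∉ S, f' i = eraseB B g' i := by
          intro i hiS
          by_cases hiB : i ∈ B
          · have h1 : f i = false := by
              rw [hfail i hiS]; simp [eraseB, hiB]
            have h2 : f' i = false := by
              rw [← hff' i (Set.mem_union_right _ (Finset.mem_coe.mpr hiB))]; exact h1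
            simp [eraseB, hiB, h2]
          · have hiSB : i ∉ S ∪ ↑B := by
              rintro (c | c)
              exacts [hiS c, hiB (Finset.mem_coe.mp c)]
            simp [eraseB, hiB, hf'g' i hiSB]
        apply hK.2
        · intro i hi
          exact hff' i (Set.mem_union_left _ hi)
        · intro i hi
          by_cases hiB : i ∈ B
          · simp [eraseB, hiB]
          · simp [eraseB, hiB, hgg' i (Set.mem_union_left _ hi)]
        · exact hfail
        · exact hfail'
    · rw [if_neg h, if_neg (fun c => h (hcond.mpr c))]

end AuxSupport
section AuxCommute

open scoped Classical

variable {V : Type*} [Fintype V] [DecidableEq V]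

lemma end_ext_basis {K₁ K₂ : Module.End ℂ (QState V)}
    (h : ∀ f, K₁ (basisVec f) = K₂ (basisVec f)) : K₁ = K₂ := by
  apply LinearMap.ext
  intro ψ
  conv_lhs => rw [basis_expand ψ]
  conv_rhs => rw [basis_expand ψ]
  rw [map_sum, map_sum]
  exact Finset.sum_congr rfl (fun f _ => by rw [map_smul, map_smul, h f])

lemma creProd_comm_of_disjoint {K : Module.End ℂ (QState V)} {S : Set V}
    (hK : SupportedOn K S) (B : Finset V) (hd : ∀ i ∈ B, i ∉ S) :
    K * creProd B = creProd B * K := by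
  apply end_ext_basis
  intro f
  funext g
  rw [creProd_mul_apply]
  have hlhs : ((K * creProd B) (basisVec f)) g =
      if ∀ i ∈ B, f i = false then (K (basisVec (setB B f))) g else 0 := by
    rw [mul_creProd_apply]
    by_cases h : ∀ i ∈ B, f i = false
    · rw [if_pos h, if_pos h]
    · rw [if_neg h, if_neg h]; rfl
  rw [hlhs]
  by_cases hf : ∀ i ∈ B, f i = false
  · rw [if_pos hf]
    by_cases hg : ∀ j ∈ B, g j = true
    · rw [if_pos hg]
      -- case C
      by_cases hfail : ∃ i, i ∉ S ∧ setB B f i ≠ g i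
      · obtain ⟨i, hiS, hne⟩ := hfail
        have hiB : i ∉ B := by
          intro hiB
          exact hne (by simp [setB, hiB, hg i hiB])
        have hne2 : f i ≠ eraseB B g i := by
          have h1 : setB B f i = f i := by simp [setB, hiB]
          have h2 : eraseB B g i = g i := by simp [eraseB, hiB]
          rw [h1] at hne
          rw [h2]
          exact hne
        rw [hK.1 _ _ ⟨i, hiS, hne⟩, hK.1 _ _ ⟨i, hiS, hne2⟩]
      · push_neg at hfail
        have hfail' : ∀ i ∉ S, f i = eraseB B g i := by
          intro i hiS
          by_cases hiB : i ∈ B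
          · simp [eraseB, hiB, hf i hiB]
          · have h1 : setB B f i = f i := by simp [setB, hiB]
            have h2 : eraseB B g i = g i := by simp [eraseB, hiB]
            rw [h2, ← hfail i hiS, h1]
        apply hK.2
        · intro i hi
          have hiB : i ∉ B := fun c => hd i c hi
          simp [setB, hiB]
        · intro i hi
          have hiB : i ∉ B := fun c => hd i c hi
          simp [eraseB, hiB]
        · exact hfail
        · exact hfail'
    · rw [if_neg hg]
      -- case B : some j ∈ B with g j = false; setB B f j = true
      push_neg at hg
      obtain ⟨j, hjB, hgj⟩ := hg
      have hgj' : g j = false := by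
        cases h : g j
        · rfl
        · exact absurd h hgj
      apply hK.1
      exact ⟨j, hd j hjB, by simp [setB, hjB, hgj']⟩
  · rw [if_neg hf]
    by_cases hg : ∀ j ∈ B, g j = true
    · rw [if_pos hg]
      push_neg at hf
      obtain ⟨j, hjB, hfj⟩ := hf
      have hfj' : f j = true := by
        cases h : f j
        · exact absurd h hfj
        · rfl
      symm
      apply hK.1
      exact ⟨j, hd j hjB, by simp [eraseB, hjB, hfj']⟩
    · rw [if_neg hg]

lemma exists_config_of_apply_ne_zero {K : Module.End ℂ (QState V)} {S : Set V}
    (hK : SupportedOn K S) {ψ : QState V} {f : V → Bool}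
    (h : (K ψ) f ≠ 0) : ∃ f', ψ f' ≠ 0 ∧ ∀ i, i ∉ S → f' i = f i := by
  rw [apply_eq_sum] at h
  obtain ⟨f', _, hf'⟩ := Finset.exists_ne_zero_of_sum_ne_zero h
  refine ⟨f', fun c => hf' (by rw [c, zero_mul]), ?_⟩
  intro i hi
  by_contra hne
  exact hf' (by rw [hK.1 f' f ⟨i, hi, hne⟩, mul_zero])

end AuxCommute

section AuxGraph

open scoped Classical

variable {V : Type*} [Fintype V] [DecidableEq V] {G : SimpleGraph V}

lemma wd_refl (r : ℕ) (v : V) : WithinDist G r v v := ⟨SimpleGraph.Walk.nil, by simp⟩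

lemma wd_symm {r : ℕ} {a b : V} (h : WithinDist G r a b) : WithinDist G r b a := by
  obtain ⟨w, hw⟩ := h
  exact ⟨w.reverse, by simpa⟩

lemma wd_mono {r r' : ℕ} (hr : r ≤ r') {a b : V} (h : WithinDist G r a b) :
    WithinDist G r' a b := by
  obtain ⟨w, hw⟩ := h
  exact ⟨w, le_trans hw hr⟩

lemma wd_trans {r s : ℕ} {a b c : V} (h1 : WithinDist G r a b) (h2 : WithinDist G s b c) :
    WithinDist G (r + s) a c := by
  obtain ⟨w1, hw1⟩ := h1
  obtain ⟨w2, hw2⟩ := h2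
  exact ⟨w1.append w2, by rw [SimpleGraph.Walk.length_append]; omega⟩

variable [DecidableRel G.Adj]

/-- The closed neighborhood of `v`. -/
def ballF1 (G : SimpleGraph V) [DecidableRel G.Adj] (v : V) : Finset V :=
  insert v (G.neighborFinset v)

lemma Qnn_eq (G : SimpleGraph V) [DecidableRel G.Adj] :
    Qnn G = ∑ v : V, creProd (ballF1 G v) := rfl

lemma mem_ballF1_self (v : V) : v ∈ ballF1 G v := Finset.mem_insert_self _ _

lemma wd_of_mem_ballF1 {v i : V} (h : i ∈ ballF1 G v) : WithinDist G 1 v i := by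
  rcases Finset.mem_insert.mp h with rfl | h
  · exact wd_refl 1 i
  · have hadj : G.Adj v i := (SimpleGraph.mem_neighborFinset G v i).mp h
    exact ⟨hadj.toWalk, by simp⟩

lemma card_ballF1 {Δ : ℕ} (hreg : ∀ v : V, G.degree v = Δ) (v : V) :
    (ballF1 G v).card = Δ + 1 := by
  rw [ballF1, Finset.card_insert_of_notMem (SimpleGraph.notMem_neighborFinset_self G v)]
  rw [G.card_neighborFinset_eq_degree v, hreg v]

/-- The ball of radius `r` around `v` as a Finset. -/
noncomputable def ballFr (G : SimpleGraph V) (v : V) (r : ℕ) : Finset V :=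
  Finset.univ.filter (fun j => WithinDist G r v j)

lemma mem_ballFr {v j : V} {r : ℕ} : j ∈ ballFr G v r ↔ WithinDist G r v j := by
  simp [ballFr]

lemma ballFr_card {Δ : ℕ} (hreg : ∀ v : V, G.degree v = Δ) :
    ∀ (r : ℕ) (v : V), (ballFr G v r).card ≤ (Δ + 1) ^ r := by
  intro r
  induction r with
  | zero =>
      intro v
      have : ballFr G v 0 ⊆ {v} := by
        intro j hj
        obtain ⟨w, hw⟩ := mem_ballFr.mp hj
        have : w.length = 0 := Nat.le_zero.mp hw
        rw [Finset.mem_singleton]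
        exact (SimpleGraph.Walk.eq_of_length_eq_zero this).symm
      simpa using Finset.card_le_card this
  | succ r ih =>
      intro v
      have hsub : ballFr G v (r+1) ⊆
          ballFr G v r ∪ (ballFr G v r).biUnion (fun x => G.neighborFinset x) := by
        intro j hj
        obtain ⟨w, hw⟩ := mem_ballFr.mp hj
        by_cases hlen : w.length ≤ r
        · exact Finset.mem_union_left _ (mem_ballFr.mpr ⟨w, hlen⟩)
        · have hlen' : w.reverse.length = r + 1 := by
            rw [SimpleGraph.Walk.length_reverse]; omega
          cases hwr : w.reverse with
          | nil =>
              rw [hwr] at hlen'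
              simp at hlen'
          | cons hadj t =>
              rename_i x
              rw [hwr] at hlen'
              simp [SimpleGraph.Walk.length_cons] at hlen'
              apply Finset.mem_union_right
              apply Finset.mem_biUnion.mpr
              refine ⟨x, mem_ballFr.mpr (wd_symm ⟨t, by omega⟩), ?_⟩
              exact (SimpleGraph.mem_neighborFinset G x j).mpr hadj.symm
      calc (ballFr G v (r+1)).card
          ≤ (ballFr G v r ∪ (ballFr G v r).biUnion (fun x => G.neighborFinset x)).card :=
            Finset.card_le_card hsub
        _ ≤ (ballFr G v r).card + ((ballFr G v r).biUnion (fun x => G.neighborFinset x)).card :=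
            Finset.card_union_le _ _
        _ ≤ (ballFr G v r).card + ∑ x ∈ ballFr G v r, (G.neighborFinset x).card := by
            have := Finset.card_biUnion_le (s := ballFr G v r)
              (t := fun x => G.neighborFinset x)
            omega
        _ ≤ (Δ+1)^r + ∑ x ∈ ballFr G v r, Δ := by
            have h1 := ih v
            have h2 : ∑ x ∈ ballFr G v r, (G.neighborFinset x).card
                = ∑ x ∈ ballFr G v r, Δ := by
              apply Finset.sum_congr rfl
              intro x _
              rw [G.card_neighborFinset_eq_degree x, hreg x]
            omega
        _ ≤ (Δ+1)^r + (Δ+1)^r * Δ := by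
            rw [Finset.sum_const, smul_eq_mul]
            have := ih v
            have : (ballFr G v r).card * Δ ≤ (Δ+1)^r * Δ := Nat.mul_le_mul_right Δ (ih v)
            omega
        _ = (Δ+1)^(r+1) := by ring

lemma exists_separated {Δ : ℕ} (hreg : ∀ v : V, G.degree v = Δ) (L : ℕ) :
    ∀ t : ℕ, t * (Δ + 1) ^ L < Fintype.card V →
      ∃ S : Finset V, S.card = t ∧ ∀ a ∈ S, ∀ b ∈ S, a ≠ b → ¬ WithinDist G L a b := by
  intro t
  induction t with
  | zero => exact fun _ => ⟨∅, by simp⟩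
  | succ t ih =>
      intro ht
      have ht' : t * (Δ + 1) ^ L < Fintype.card V := by
        have : t * (Δ+1)^L ≤ (t+1) * (Δ+1)^L := Nat.mul_le_mul_right _ (by omega)
        omega
      obtain ⟨S, hcard, hsep⟩ := ih ht'
      have hbig : (S.biUnion (fun a => ballFr G a L)).card < Fintype.card V := by
        calc (S.biUnion (fun a => ballFr G a L)).card
            ≤ ∑ a ∈ S, (ballFr G a L).card := Finset.card_biUnion_le
          _ ≤ ∑ a ∈ S, (Δ+1)^L := Finset.sum_le_sum (fun a _ => ballFr_card hreg L a)
          _ = t * (Δ+1)^L := by rw [Finset.sum_const, hcard, smul_eq_mul]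
          _ < Fintype.card V := ht'
      have hex : ∃ v : V, v ∉ S.biUnion (fun a => ballFr G a L) := by
        by_contra hc
        push_neg at hc
        have : (Finset.univ : Finset V) ⊆ S.biUnion (fun a => ballFr G a L) :=
          fun v _ => hc v
        have := Finset.card_le_card this
        rw [Finset.card_univ] at this
        omega
      obtain ⟨v, hv⟩ := hex
      have hfar : ∀ a ∈ S, ¬ WithinDist G L a v := by
        intro a ha hw
        exact hv (Finset.mem_biUnion.mpr ⟨a, ha, mem_ballFr.mpr hw⟩)
      have hvS : v ∉ S := by
        intro hvS
        exact hfar v hvS (wd_refl L v)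
      refine ⟨insert v S, by rw [Finset.card_insert_of_notMem hvS, hcard], ?_⟩
      intro a ha b hb hab
      rcases Finset.mem_insert.mp ha with rfl | haS
      · rcases Finset.mem_insert.mp hb with rfl | hbS
        · exact absurd rfl hab
        · exact fun hw => hfar b hbS (wd_symm hw)
      · rcases Finset.mem_insert.mp hb with rfl | hbS
        · exact fun hw => hfar a haS hw
        · exact hsep a haS b hbS hab

end AuxGraph
section AuxLoc

open scoped Classical

variable {V : Type*} [Fintype V] [DecidableEq V] {G : SimpleGraph V} [DecidableRel G.Adj]

/-- `Z` has all points within distance `D` of each other. -/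
def SDiam (G : SimpleGraph V) (Z : Finset V) (D : ℕ) : Prop :=
  ∀ a ∈ Z, ∀ b ∈ Z, WithinDist G D a b

/-- `O` is a sum of operators, each supported on a set of at most `n` sites of diameter `≤ D`. -/
def Loc (G : SimpleGraph V) (n D : ℕ) (O : Module.End ℂ (QState V)) : Prop :=
  ∃ g : Finset V → Module.End ℂ (QState V),
    (∀ Y, SupportedOn (g Y) ↑Y) ∧
    (∀ Y, g Y ≠ 0 → Y.card ≤ n ∧ SDiam G Y D) ∧
    O = ∑ Y : Finset V, g Y

lemma Loc_step {Δ : ℕ} (hreg : ∀ v : V, G.degree v = Δ) {n D : ℕ}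
    {O : Module.End ℂ (QState V)} (h : Loc G n D O) :
    Loc G (n + Δ) (D + 4) (O * Qnn G - Qnn G * O) := by
  obtain ⟨g, hs, hb, rfl⟩ := h
  set F : Finset V → V → Module.End ℂ (QState V) :=
    fun Y v => g Y * creProd (ballF1 G v) - creProd (ballF1 G v) * g Y with hF
  have hOQ : (∑ Y : Finset V, g Y) * Qnn G - Qnn G * (∑ Y : Finset V, g Y)
      = ∑ Y : Finset V, ∑ v : V, F Y v := by
    rw [Qnn_eq, Finset.sum_mul_sum, Finset.sum_mul_sum]
    rw [Finset.sum_comm (s := Finset.univ (α := V))]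
    rw [← Finset.sum_sub_distrib]
    exact Finset.sum_congr rfl (fun Y _ => by rw [← Finset.sum_sub_distrib])
  refine ⟨fun Z => ∑ Y : Finset V, ∑ v : V,
    if g Y ≠ 0 ∧ ¬ Disjoint Y (ballF1 G v) ∧ Y ∪ ballF1 G v = Z then F Y v else 0,
    ?_, ?_, ?_⟩
  · intro Z
    apply supportedOn_sum
    intro Y _
    apply supportedOn_sum
    intro v _
    by_cases hc : g Y ≠ 0 ∧ ¬ Disjoint Y (ballF1 G v) ∧ Y ∪ ballF1 G v = Z
    · rw [if_pos hc]
      have h1 : SupportedOn (F Y v) (↑Y ∪ ↑(ballF1 G v)) := by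
        apply supportedOn_sub
        · exact supportedOn_mul_creProd (hs Y) _
        · exact supportedOn_creProd_mul (hs Y) _
      have h2 : (↑Y ∪ ↑(ballF1 G v) : Set V) = ↑(Y ∪ ballF1 G v) := by
        rw [Finset.coe_union]
      rw [h2, hc.2.2] at h1
      exact h1
    · rw [if_neg hc]
      exact supportedOn_zero _
  · intro Z hZ
    have : ∃ Y : Finset V, (∑ v : V,
        if g Y ≠ 0 ∧ ¬ Disjoint Y (ballF1 G v) ∧ Y ∪ ballF1 G v = Z then F Y v else 0) ≠ 0 := by
      by_contra hc
      push_neg at hc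
      exact hZ (Finset.sum_eq_zero (fun Y _ => hc Y))
    obtain ⟨Y, hY⟩ := this
    have : ∃ v : V,
        (if g Y ≠ 0 ∧ ¬ Disjoint Y (ballF1 G v) ∧ Y ∪ ballF1 G v = Z then F Y v else 0) ≠ 0 := by
      by_contra hc
      push_neg at hc
      exact hY (Finset.sum_eq_zero (fun v _ => hc v))
    obtain ⟨v, hv⟩ := this
    have hc : g Y ≠ 0 ∧ ¬ Disjoint Y (ballF1 G v) ∧ Y ∪ ballF1 G v = Z := by
      by_contra hc
      rw [if_neg hc] at hv
      exact hv rfl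
    obtain ⟨hgY, hnd, hZeq⟩ := hc
    obtain ⟨hcard, hdiam⟩ := hb Y hgY
    obtain ⟨w, hwY, hwB⟩ := Finset.not_disjoint_iff.mp hnd
    constructor
    · -- card bound
      rw [← hZeq]
      have h1 : Y ∪ ballF1 G v = Y ∪ (ballF1 G v \ Y) := by
        rw [Finset.union_sdiff_self_eq_union]
      have h2 : (ballF1 G v \ Y).card < (ballF1 G v).card := by
        apply Finset.card_lt_card
        constructor
        · exact Finset.sdiff_subset
        · intro hsub
          exact (Finset.mem_sdiff.mp (hsub hwB)).2 hwY
      rw [card_ballF1 hreg v] at h2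
      calc (Y ∪ ballF1 G v).card = (Y ∪ (ballF1 G v \ Y)).card := by rw [← h1]
        _ ≤ Y.card + (ballF1 G v \ Y).card := Finset.card_union_le _ _
        _ ≤ n + Δ := by omega
    · -- diam bound
      rw [← hZeq]
      intro a ha b hb'
      have hvw : WithinDist G 1 v w := wd_of_mem_ballF1 hwB
      rcases Finset.mem_union.mp ha with haY | haB
      · rcases Finset.mem_union.mp hb' with hbY | hbB
        · exact wd_mono (by omega) (hdiam a haY b hbY)
        · have h1 : WithinDist G D a w := hdiam a haY w hwY
          have h3 : WithinDist G 1 v b := wd_of_mem_ballF1 hbB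
          exact wd_mono (by omega) (wd_trans h1 (wd_trans (wd_symm hvw) h3))
      · rcases Finset.mem_union.mp hb' with hbY | hbB
        · have h1 : WithinDist G 1 v a := wd_of_mem_ballF1 haB
          have h3 : WithinDist G D w b := hdiam w hwY b hbY
          exact wd_mono (by omega) (wd_trans (wd_symm h1) (wd_trans hvw h3))
        · have h1 : WithinDist G 1 v a := wd_of_mem_ballF1 haB
          have h3 : WithinDist G 1 v b := wd_of_mem_ballF1 hbB
          exact wd_mono (by omega) (wd_trans (wd_symm h1) h3)
  · rw [hOQ]
    have hsum : ∀ (Y : Finset V) (v : V),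
        (∑ Z : Finset V,
          if g Y ≠ 0 ∧ ¬ Disjoint Y (ballF1 G v) ∧ Y ∪ ballF1 G v = Z then F Y v else 0)
        = F Y v := by
      intro Y v
      by_cases hP : g Y ≠ 0
      · by_cases hQ : ¬ Disjoint Y (ballF1 G v)
        · have hred : ∀ Z : Finset V,
              (if g Y ≠ 0 ∧ ¬ Disjoint Y (ballF1 G v) ∧ Y ∪ ballF1 G v = Z then F Y v else 0)
              = if Y ∪ ballF1 G v = Z then F Y v else 0 := by
            intro Z
            by_cases hZ : Y ∪ ballF1 G v = Z
            · rw [if_pos ⟨hP, hQ, hZ⟩, if_pos hZ]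
            · rw [if_neg (fun c => hZ c.2.2), if_neg hZ]
          rw [Finset.sum_congr rfl (fun Z _ => hred Z), Finset.sum_ite_eq]
          simp
        · push_neg at hQ
          have hcomm := creProd_comm_of_disjoint (hs Y) (ballF1 G v)
            (fun i hiB hiY => (Finset.disjoint_right.mp hQ hiB) (Finset.mem_coe.mp hiY))
          have hF0 : F Y v = 0 := by
            rw [hF]
            exact sub_eq_zero.mpr hcomm
          simp [hF0]
      · push_neg at hP
        have hF0 : F Y v = 0 := by simp [hF, hP]
        simp [hF0]
    have hswap : (∑ Z : Finset V, ∑ Y : Finset V, ∑ v : V,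
          if g Y ≠ 0 ∧ ¬ Disjoint Y (ballF1 G v) ∧ Y ∪ ballF1 G v = Z then F Y v else 0)
        = ∑ Y : Finset V, ∑ v : V, F Y v := by
      rw [Finset.sum_comm]
      apply Finset.sum_congr rfl
      intro Y _
      rw [Finset.sum_comm]
      exact Finset.sum_congr rfl (fun v _ => hsum Y v)
    exact hswap.symm

end AuxLoc
section AuxTower

open scoped Classical

variable {V : Type*} [Fintype V] [DecidableEq V] {G : SimpleGraph V} [DecidableRel G.Adj]

lemma Qnn_apply (ψ : QState V) (g : V → Bool) :
    Qnn G ψ g = ∑ v : V,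
      if ∀ i ∈ ballF1 G v, g i = true then ψ (eraseB (ballF1 G v) g) else 0 := by
  rw [Qnn_eq]
  rw [LinearMap.sum_apply, Finset.sum_apply]
  exact Finset.sum_congr rfl (fun v _ => creProd_apply_gen _ _ _)

/-- The tower state. -/
noncomputable def Wt (G : SimpleGraph V) [DecidableRel G.Adj] (p : ℕ) : QState V :=
  ((Qnn G) ^ p) (vac V)

lemma Wt_zero : Wt G 0 = vac V := rfl

lemma Wt_succ (p : ℕ) : Wt G (p + 1) = Qnn G (Wt G p) := by
  show ((Qnn G) ^ (p+1)) (vac V) = _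
  rw [pow_succ']
  rfl

lemma Wt_ne_zero_mono {p : ℕ} (h : Wt G (p + 1) ≠ 0) : Wt G p ≠ 0 := by
  intro hc
  rw [Wt_succ, hc, map_zero] at h
  exact h rfl

lemma vac_apply_ne {g : V → Bool} (h : vac V g ≠ 0) : g = fun _ => false := by
  by_contra hc
  exact h (if_neg hc)

lemma Wt_supp_card {Δ : ℕ} (hreg : ∀ v : V, G.degree v = Δ) :
    ∀ (p : ℕ) (g : V → Bool), Wt G p g ≠ 0 → (suppF g).card = p * (Δ + 1) := by
  intro p
  induction p with
  | zero =>
      intro g hg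
      have := vac_apply_ne hg
      subst this
      simp [suppF]
  | succ p ih =>
      intro g hg
      rw [Wt_succ, Qnn_apply] at hg
      obtain ⟨v, _, hv⟩ := Finset.exists_ne_zero_of_sum_ne_zero hg
      by_cases hc : ∀ i ∈ ballF1 G v, g i = true
      · rw [if_pos hc] at hv
        have hcard := ih _ hv
        rw [suppF_eraseB] at hcard
        have hsub : ballF1 G v ⊆ suppF g := fun i hi => mem_suppF.mpr (hc i hi)
        have := Finset.card_sdiff_add_card_eq_card hsub
        rw [card_ballF1 hreg v] at this
        have : (suppF g).card = p * (Δ + 1) + (Δ + 1) := by omega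
        rw [this]
        ring
      · rw [if_neg hc] at hv
        exact absurd rfl hv

lemma sum_nonneg_real {ι : Type*} {s : Finset ι} {t : ι → ℂ}
    (h : ∀ i ∈ s, ∃ r : ℝ, 0 ≤ r ∧ t i = r) :
    ∃ r : ℝ, 0 ≤ r ∧ ∑ i ∈ s, t i = r := by
  induction s using Finset.cons_induction with
  | empty => exact ⟨0, le_refl 0, by simp⟩
  | cons i s his ih =>
      obtain ⟨r1, hr1, ht1⟩ := h i (Finset.mem_cons_self i s)
      obtain ⟨r2, hr2, ht2⟩ := ih (fun j hj => h j (Finset.mem_cons.mpr (Or.inr hj)))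
      refine ⟨r1 + r2, by positivity, ?_⟩
      rw [Finset.sum_cons, ht1, ht2]
      push_cast
      ring

lemma Wt_nonneg : ∀ (p : ℕ) (g : V → Bool), ∃ r : ℝ, 0 ≤ r ∧ Wt G p g = r := by
  intro p
  induction p with
  | zero =>
      intro g
      by_cases h : g = fun _ => false
      · exact ⟨1, by norm_num, by rw [Wt_zero]; show (if g = _ then (1:ℂ) else 0) = 1; rw [if_pos h]⟩
      · exact ⟨0, le_refl 0, by rw [Wt_zero]; show (if g = _ then (1:ℂ) else 0) = 0; rw [if_neg h]⟩
  | succ p ih =>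
      intro g
      rw [Wt_succ, Qnn_apply]
      apply sum_nonneg_real
      intro v _
      by_cases hc : ∀ i ∈ ballF1 G v, g i = true
      · rw [if_pos hc]
        exact ih _
      · rw [if_neg hc]
        exact ⟨0, le_refl 0, rfl⟩

lemma Wt_pos (T : Finset V)
    (hd : ∀ a ∈ T, ∀ b ∈ T, a ≠ b → Disjoint (ballF1 G a) (ballF1 G b)) :
    ∃ r : ℝ, 0 < r ∧ Wt G T.card (chi (T.biUnion (fun a => ballF1 G a))) = r := by
  induction T using Finset.induction_on with
  | empty =>
      refine ⟨1, by norm_num, ?_⟩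
      rw [Finset.card_empty, Wt_zero]
      show (if chi (Finset.biUnion ∅ _) = _ then (1:ℂ) else 0) = 1
      rw [if_pos]
      funext i
      simp [chi]
  | @insert a T haT ih =>
      obtain ⟨r, hr, hWr⟩ := ih (fun x hx y hy hxy =>
        hd x (Finset.mem_insert_of_mem hx) y (Finset.mem_insert_of_mem hy) hxy)
      rw [Finset.card_insert_of_notMem haT, Wt_succ, Qnn_apply]
      set U' := (insert a T).biUnion (fun x => ballF1 G x) with hU'
      have hBaU : ballF1 G a ⊆ U' := fun i hi =>
        Finset.mem_biUnion.mpr ⟨a, Finset.mem_insert_self a T, hi⟩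
      have herase : eraseB (ballF1 G a) (chi U') = chi (T.biUnion (fun x => ballF1 G x)) := by
        funext i
        by_cases hiB : i ∈ ballF1 G a
        · have hiT : i ∉ T.biUnion (fun x => ballF1 G x) := by
            intro hc
            obtain ⟨b, hbT, hib⟩ := Finset.mem_biUnion.mp hc
            have hba : b ≠ a := fun hba => haT (hba ▸ hbT)
            exact (Finset.disjoint_left.mp
              (hd a (Finset.mem_insert_self a T) b (Finset.mem_insert_of_mem hbT)
                (fun c => hba c.symm)) hiB) hib
          simp [eraseB, chi, hiB, hiT]
        · have : (i ∈ U') ↔ (i ∈ T.biUnion (fun x => ballF1 G x)) := by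
            rw [hU']
            constructor
            · intro hc
              obtain ⟨b, hbT, hib⟩ := Finset.mem_biUnion.mp hc
              rcases Finset.mem_insert.mp hbT with rfl | hbT'
              · exact absurd hib hiB
              · exact Finset.mem_biUnion.mpr ⟨b, hbT', hib⟩
            · intro hc
              obtain ⟨b, hbT, hib⟩ := Finset.mem_biUnion.mp hc
              exact Finset.mem_biUnion.mpr ⟨b, Finset.mem_insert_of_mem hbT, hib⟩
          by_cases hiU : i ∈ U'
          · simp [eraseB, chi, hiB, hiU, this.mp hiU]
          · have hiT : i ∉ T.biUnion (fun x => ballF1 G x) := fun c => hiU (this.mpr c)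
            simp [eraseB, chi, hiB, hiU, hiT]
      have hterm : ∀ v : V, ∃ rv : ℝ, 0 ≤ rv ∧
          (if ∀ i ∈ ballF1 G v, chi U' i = true
            then Wt G T.card (eraseB (ballF1 G v) (chi U')) else 0) = rv := by
        intro v
        by_cases hc : ∀ i ∈ ballF1 G v, chi U' i = true
        · rw [if_pos hc]
          exact Wt_nonneg T.card _
        · rw [if_neg hc]
          exact ⟨0, le_refl 0, rfl⟩
      set rv := fun v => Classical.choose (hterm v) with hrv
      have hrv_spec : ∀ v, 0 ≤ rv v ∧ _ = (rv v : ℂ) := fun v => Classical.choose_spec (hterm v)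
      have hsum : (∑ v : V, if ∀ i ∈ ballF1 G v, chi U' i = true
            then Wt G T.card (eraseB (ballF1 G v) (chi U')) else 0)
          = ((∑ v : V, rv v : ℝ) : ℂ) := by
        push_cast
        exact Finset.sum_congr rfl (fun v _ => (hrv_spec v).2)
      have hacond : ∀ i ∈ ballF1 G a, chi U' i = true := by
        intro i hi
        simp [chi, hBaU hi]
      have hra : rv a = r := by
        have h1 := (hrv_spec a).2
        rw [if_pos hacond, herase, hWr] at h1
        exact_mod_cast h1.symm
      refine ⟨∑ v : V, rv v, ?_, hsum⟩
      have : 0 < rv a := by rw [hra]; exact hr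
      apply Finset.sum_pos' (fun v _ => (hrv_spec v).1)
      exact ⟨a, Finset.mem_univ a, this⟩

end AuxTower
section AuxAdQ

open scoped Classical

variable {V : Type*} [Fintype V] [DecidableEq V] {G : SimpleGraph V} [DecidableRel G.Adj]

/-- Iterated commutator with `Qnn`. -/
noncomputable def adQ (G : SimpleGraph V) [DecidableRel G.Adj]
    (H : Module.End ℂ (QState V)) : ℕ → Module.End ℂ (QState V)
  | 0 => H
  | (c+1) => adQ G H c * Qnn G - Qnn G * adQ G H c

/-- Finite difference operator. -/
def ddc (u : ℕ → ℂ) : ℕ → ℂ := fun p => u (p + 1) - u p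

/-- The putative spacing sequence. -/
noncomputable def omg (G : SimpleGraph V) [DecidableRel G.Adj] (E : ℕ → ℂ) : ℕ → ℂ :=
  fun p => if Wt G (p + 1) ≠ 0 then E (p + 1) - E p else 0

lemma adQ_tower {H : Module.End ℂ (QState V)} {E : ℕ → ℂ}
    (hE : ∀ p : ℕ, Wt G p ≠ 0 → H (Wt G p) = E p • Wt G p) :
    ∀ (c p : ℕ), (adQ G H (c + 1)) (Wt G p) = (ddc^[c] (omg G E)) p • Wt G (p + c + 1) := by
  intro c
  induction c with
  | zero =>
      intro p
      show (adQ G H 0 * Qnn G - Qnn G * adQ G H 0) (Wt G p) = _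
      rw [LinearMap.sub_apply, Module.End.mul_apply, Module.End.mul_apply]
      show H (Qnn G (Wt G p)) - Qnn G (H (Wt G p)) = (ddc^[0] (omg G E)) p • Wt G (p + 0 + 1)
      rw [Function.iterate_zero_apply, Nat.add_zero, ← Wt_succ]
      by_cases h1 : Wt G (p + 1) = 0
      · by_cases h0 : Wt G p = 0
        · rw [h1, h0]
          simp
        · rw [h1, hE p h0, map_smul, ← Wt_succ, h1]
          simp
      · have h0 : Wt G p ≠ 0 := Wt_ne_zero_mono h1
        rw [hE (p+1) h1, hE p h0, map_smul, ← Wt_succ]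
        simp only [omg]
        rw [if_pos h1, sub_smul]
  | succ c ih =>
      intro p
      show (adQ G H (c+1) * Qnn G - Qnn G * adQ G H (c+1)) (Wt G p) = _
      rw [LinearMap.sub_apply, Module.End.mul_apply, Module.End.mul_apply]
      rw [← Wt_succ, ih (p+1), ih p, map_smul, ← Wt_succ]
      have h1 : p + 1 + c + 1 = p + c + 1 + 1 := by omega
      rw [h1]
      rw [← sub_smul]
      congr 1
      rw [Function.iterate_succ_apply']
      rfl

lemma adQ_loc {Δ k R : ℕ} (hreg : ∀ v : V, G.degree v = Δ)
    {H : Module.End ℂ (QState V)} (hH : IsKLocalRangeHam G k R H) :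
    ∀ c : ℕ, Loc G (k + c * Δ) (R - 1 + 4 * c) (adQ G H c) := by
  intro c
  induction c with
  | zero =>
      obtain ⟨h, hs, hb, hsum⟩ := hH
      refine ⟨h, hs, ?_, hsum⟩
      intro X hX
      obtain ⟨_, hdiam, hcard⟩ := hb X hX
      exact ⟨by omega, fun a ha b hb' => wd_mono (by omega) (hdiam a ha b hb')⟩
  | succ c ih =>
      have := Loc_step hreg ih
      have h1 : k + c * Δ + Δ = k + (c+1) * Δ := by ring
      have h2 : R - 1 + 4 * c + 4 = R - 1 + 4 * (c+1) := by ring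
      rw [h1, h2] at this
      exact this

lemma dense_vanish {Δ k R : ℕ} (hreg : ∀ v : V, G.degree v = Δ)
    {H : Module.End ℂ (QState V)} (hH : IsKLocalRangeHam G k R H)
    {E : ℕ → ℂ} (hE : ∀ p : ℕ, Wt G p ≠ 0 → H (Wt G p) = E p • Wt G p) :
    ∀ (j p : ℕ), k ≤ j → Wt G (p + j + 1) ≠ 0 → (ddc^[j] (omg G E)) p = 0 := by
  intro j p hkj hW
  obtain ⟨f, hf⟩ := Function.ne_iff.mp hW
  rw [Pi.zero_apply] at hf
  have htower := adQ_tower hE j p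
  obtain ⟨g, hs, hb, hsum⟩ := adQ_loc hreg hH (j + 1)
  have hzero : (adQ G H (j+1)) (Wt G p) f = 0 := by
    rw [hsum, LinearMap.sum_apply, Finset.sum_apply]
    apply Finset.sum_eq_zero
    intro Z _
    by_contra hne
    obtain ⟨f', hf', hoff⟩ := exists_config_of_apply_ne_zero (hs Z) hne
    have hcard' := Wt_supp_card hreg p f' hf'
    have hcardf := Wt_supp_card hreg (p + j + 1) f hf
    have hZcard : Z.card ≤ k + (j+1) * Δ := by
      by_cases hgZ : g Z = 0
      · rw [hgZ] at hne
        exact absurd (by simp : ((0 : Module.End ℂ (QState V)) (Wt G p)) f = 0) hne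
      · exact (hb Z hgZ).1
    have hsub : suppF f \ Z ⊆ suppF f' := by
      intro i hi
      obtain ⟨hi1, hi2⟩ := Finset.mem_sdiff.mp hi
      apply mem_suppF.mpr
      rw [hoff i (fun c => hi2 (Finset.mem_coe.mp c))]
      exact mem_suppF.mp hi1
    have h1 : (suppF f).card ≤ (suppF f \ Z).card + Z.card := by
      have : suppF f ⊆ (suppF f \ Z) ∪ Z := by
        intro i hi
        by_cases hiZ : i ∈ Z
        · exact Finset.mem_union_right _ hiZ
        · exact Finset.mem_union_left _ (Finset.mem_sdiff.mpr ⟨hi, hiZ⟩)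
      calc (suppF f).card ≤ ((suppF f \ Z) ∪ Z).card := Finset.card_le_card this
        _ ≤ (suppF f \ Z).card + Z.card := Finset.card_union_le _ _
    have h2 : (suppF f \ Z).card ≤ (suppF f').card := Finset.card_le_card hsub
    rw [hcardf] at h1
    rw [hcard'] at h2
    -- (p+j+1)(Δ+1) ≤ p(Δ+1) + k + (j+1)Δ  ⟹  (j+1)(Δ+1) ≤ k + (j+1)Δ ⟹ j+1 ≤ k, contra
    have : (p + j + 1) * (Δ + 1) ≤ p * (Δ + 1) + (k + (j+1) * Δ) := by
      calc (p + j + 1) * (Δ + 1) ≤ (suppF f \ Z).card + Z.card := h1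
        _ ≤ p * (Δ+1) + (k + (j+1) * Δ) := by omega
    nlinarith [this]
  rw [htower, Pi.smul_apply, smul_eq_mul] at hzero
  rcases mul_eq_zero.mp hzero with h | h
  · exact h
  · exact absurd h hf

lemma dilute_vanish {Δ k R : ℕ} (hreg : ∀ v : V, G.degree v = Δ)
    {H : Module.End ℂ (QState V)} (hH : IsKLocalRangeHam G k R H)
    {E : ℕ → ℂ} (hE : ∀ p : ℕ, Wt G p ≠ 0 → H (Wt G p) = E p • Wt G p)
    (hN : k * (Δ + 1) ^ (R + 4 * k + 4) < Fintype.card V) :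
    ∀ j : ℕ, 1 ≤ j → j + 1 ≤ k → (ddc^[j] (omg G E)) 0 = 0 := by
  intro j hj1 hjk
  set L := R + 4 * k + 4 with hL
  have hsep : ∃ S : Finset V, S.card = j + 1 ∧
      ∀ a ∈ S, ∀ b ∈ S, a ≠ b → ¬ WithinDist G L a b := by
    apply exists_separated hreg
    calc (j+1) * (Δ+1)^L ≤ k * (Δ+1)^L := Nat.mul_le_mul_right _ hjk
      _ < Fintype.card V := hN
  obtain ⟨T, hTcard, hTsep⟩ := hsep
  have hdisj : ∀ a ∈ T, ∀ b ∈ T, a ≠ b → Disjoint (ballF1 G a) (ballF1 G b) := by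
    intro a ha b hb hab
    rw [Finset.disjoint_left]
    intro i hia hib
    apply hTsep a ha b hb hab
    have h1 : WithinDist G 1 a i := wd_of_mem_ballF1 hia
    have h2 : WithinDist G 1 b i := wd_of_mem_ballF1 hib
    exact wd_mono (by omega) (wd_trans h1 (wd_symm h2))
  obtain ⟨r, hr, hWr⟩ := Wt_pos T hdisj
  rw [hTcard] at hWr
  set f := chi (T.biUnion (fun a => ballF1 G a)) with hfdef
  have hfne : Wt G (j + 1) f ≠ 0 := by
    rw [hWr]
    exact_mod_cast ne_of_gt hr
  have htower := adQ_tower hE j 0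
  obtain ⟨g, hs, hb, hsum⟩ := adQ_loc hreg hH (j + 1)
  have hzero : (adQ G H (j+1)) (Wt G 0) f = 0 := by
    rw [hsum, LinearMap.sum_apply, Finset.sum_apply]
    apply Finset.sum_eq_zero
    intro Z _
    by_contra hne
    obtain ⟨f', hf', hoff⟩ := exists_config_of_apply_ne_zero (hs Z) hne
    have hf'0 : f' = fun _ => false := vac_apply_ne hf'
    have hUZ : ∀ i, f i = true → i ∈ Z := by
      intro i hfi
      by_contra hiZ
      have := hoff i (fun c => hiZ (Finset.mem_coe.mp c))
      rw [hf'0] at this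
      simp [← this] at hfi
    -- two distinct centers in T, both in Z
    have h2card : 1 < T.card := by omega
    obtain ⟨a, ha, b, hb', hab⟩ := Finset.one_lt_card.mp h2card
    have haf : f a = true := by
      rw [hfdef]
      have hmem : a ∈ T.biUnion (fun x => ballF1 G x) :=
        Finset.mem_biUnion.mpr ⟨a, ha, mem_ballF1_self a⟩
      simp [chi, hmem]
    have hbf : f b = true := by
      rw [hfdef]
      have hmem : b ∈ T.biUnion (fun x => ballF1 G x) :=
        Finset.mem_biUnion.mpr ⟨b, hb', mem_ballF1_self b⟩
      simp [chi, hmem]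
    have haZ : a ∈ Z := hUZ a haf
    have hbZ : b ∈ Z := hUZ b hbf
    have hgZ : g Z ≠ 0 := by
      intro hc
      rw [hc] at hne
      exact hne (by simp : ((0 : Module.End ℂ (QState V)) (Wt G 0)) f = 0)
    have hdiam := (hb Z hgZ).2 a haZ b hbZ
    apply hTsep a ha b hb' hab
    apply wd_mono _ hdiam
    omega
  rw [htower, Pi.smul_apply, smul_eq_mul] at hzero
  have hidx : (0 : ℕ) + j + 1 = j + 1 := by omega
  rw [hidx] at hzero
  rcases mul_eq_zero.mp hzero with h | h
  · exact h
  · exact absurd h hfne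

end AuxAdQ
/-- Equal spacing for the tower generated by `Q†_{nn}` on connected Δ-regular
graphs with pairwise distinct closed neighborhoods, for k-local Hamiltonians of range R,
once `N > C(Δ,k,R)`. -/
theorem Qnn_tower_equal_spacing :
    ∃ C : ℕ × ℕ × ℕ → ℕ,
      ∀ (Δ k R : ℕ), 0 < Δ → 0 < k → 0 < R →
      ∀ (V : Type) (_ : Fintype V) (_ : DecidableEq V)
        (G : SimpleGraph V) (_ : DecidableRel G.Adj),
        G.Connected →
        C (Δ, k, R) < Fintype.card V →
        (∀ v : V, G.degree v = Δ) →
        Function.Injective (fun i : V => insert i (G.neighborFinset i)) →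
        ∀ H : Module.End ℂ (QState V),
          IsKLocalRangeHam G k R H →
          ∀ E : ℕ → ℂ,
            (∀ p : ℕ, ((Qnn G) ^ p) (vac V) ≠ 0 →
              H (((Qnn G) ^ p) (vac V)) = E p • ((Qnn G) ^ p) (vac V)) →
            ∃ Ω ω : ℂ, ∀ p : ℕ, ((Qnn G) ^ p) (vac V) ≠ 0 → E p = Ω + ω * p := by
  classical
  refine ⟨fun t => (t.2.1 + 1) * (t.1 + 1) ^ (t.2.2 + 4 * t.2.1 + 4), ?_⟩
  intro Δ k R hΔ hk hR V instF instD G instAdj hconn hN hreg hinj H hH E hE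
  have hE' : ∀ p : ℕ, Wt G p ≠ 0 → H (Wt G p) = E p • Wt G p := hE
  have hC : (k + 1) * (Δ + 1) ^ (R + 4 * k + 4) < Fintype.card V := hN
  have hNk : k * (Δ + 1) ^ (R + 4 * k + 4) < Fintype.card V :=
    lt_of_le_of_lt (Nat.mul_le_mul_right _ (Nat.le_succ k)) hC
  have hP : ∀ d : ℕ, ∀ j : ℕ, j + d = k → 1 ≤ j →
      ∀ p : ℕ, Wt G (p + j + 1) ≠ 0 → (ddc^[j] (omg G E)) p = 0 := by
    intro d
    induction d with
    | zero =>
        intro j hjd hj1 p hW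
        exact dense_vanish hreg hH hE' j p (by omega) hW
    | succ d ih =>
        intro j hjd hj1 p
        induction p with
        | zero =>
            intro _
            exact dilute_vanish hreg hH hE' hNk j hj1 (by omega)
        | succ p ihp =>
            intro hW
            have hW1 : Wt G (p + j + 1 + 1) ≠ 0 := by
              have he : p + 1 + j + 1 = p + j + 1 + 1 := by omega
              rw [← he]
              exact hW
            have hW' : Wt G (p + j + 1) ≠ 0 := Wt_ne_zero_mono hW1
            have h1 : (ddc^[j + 1] (omg G E)) p = 0 := by
              apply ih (j + 1) (by omega) (by omega) p
              have he : p + (j + 1) + 1 = p + j + 1 + 1 := by omega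
              rw [he]
              exact hW1
            have h2 : (ddc^[j] (omg G E)) p = 0 := ihp hW'
            have h3 : (ddc^[j + 1] (omg G E)) p
                = (ddc^[j] (omg G E)) (p + 1) - (ddc^[j] (omg G E)) p := by
              rw [Function.iterate_succ_apply']
              rfl
            rw [h1, h2, sub_zero] at h3
            exact h3.symm
  have hP1 : ∀ p : ℕ, Wt G (p + 2) ≠ 0 → ddc (omg G E) p = 0 := by
    intro p hW
    have h := hP (k - 1) 1 (by omega) (le_refl 1) p
      (by have he : p + 1 + 1 = p + 2 := by omega
          rw [he]; exact hW)
    simpa using h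
  have homega : ∀ p : ℕ, Wt G (p + 1) ≠ 0 → omg G E p = omg G E 0 := by
    intro p
    induction p with
    | zero => intro _; rfl
    | succ p ihp =>
        intro hW
        have hd : ddc (omg G E) p = 0 := by
          apply hP1 p
          have he : p + 2 = p + 1 + 1 := by omega
          rw [he]
          exact hW
        have hd' : omg G E (p + 1) - omg G E p = 0 := hd
        rw [sub_eq_zero.mp hd', ihp (Wt_ne_zero_mono hW)]
  refine ⟨E 0, omg G E 0, ?_⟩
  intro p
  induction p with
  | zero =>
      intro _
      push_cast
      ring
  | succ p ihp =>
      intro hWa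
      have hW : Wt G (p + 1) ≠ 0 := hWa
      have hp : Wt G p ≠ 0 := Wt_ne_zero_mono hW
      have hom := homega p hW
      have homg_val : omg G E p = E (p + 1) - E p := by
        simp only [omg]
        rw [if_pos hW]
      have hEp : E p = E 0 + omg G E 0 * p := ihp hp
      have hstep : E (p + 1) = E p + omg G E 0 := by
        rw [← hom, homg_val]
        ring
      rw [hstep, hEp]
      push_cast
      ring
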